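/- Let A be a 3×3 real matrix with ‖A - e^{κt}·Id‖ ≤ (1/9)·e^{κt} in operator norm, for some real numbers κ ≥ 1 and t ≥ 0. Then |det A| ≥ (1/2)·e^{3κt}. -/

import Mathlib

/-- If a linear map `A` on `ℝ³` satisfies `‖A - e^{κt}·Id‖ ≤ (1/9)·e^{κt}` in operator norm,
with `κ ≥ 1` and `t ≥ 0`, then `|det A| ≥ (1/2)·e^{3κt}`. -/
theorem stmt2
    (A : EuclideanSpace ℝ (Fin 3) →L[ℝ] EuclideanSpace ℝ (Fin 3))
    (κ t : ℝ) (hκ : 1 ≤ κ) (ht : 0 ≤ t)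
    (hA : ‖A - Real.exp (κ * t) • (ContinuousLinearMap.id ℝ (EuclideanSpace ℝ (Fin 3)))‖
        ≤ (1 / 9) * Real.exp (κ * t)) :
    (1 / 2) * Real.exp (3 * κ * t) ≤ |A.det| := by
  set E := EuclideanSpace ℝ (Fin 3)
  set e := Real.exp (κ * t) with he
  have hepos : 0 < e := Real.exp_pos _
  set c : ℝ := (8 / 9) * e with hc
  have hcpos : 0 < c := by positivity
  -- lower bound ‖A x‖ ≥ c ‖x‖
  have hlow : ∀ x : E, c * ‖x‖ ≤ ‖A x‖ := by
    intro x
    have h1 : ‖A x - e • x‖ ≤ (1 / 9) * e * ‖x‖ := by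
      have := (A - e • ContinuousLinearMap.id ℝ E).le_of_opNorm_le hA x
      simp at this ⊢
      exact this
    have h2 : ‖e • x‖ - ‖A x‖ ≤ ‖A x - e • x‖ := by
      have := norm_sub_norm_le (e • x) (A x)
      have h3 : ‖e • x - A x‖ = ‖A x - e • x‖ := norm_sub_rev _ _
      linarith
    have h4 : ‖e • x‖ = e * ‖x‖ := by
      rw [norm_smul, Real.norm_eq_abs, abs_of_pos hepos]
    nlinarith [norm_nonneg x]
  -- A is injective, hence surjective
  have hinj : Function.Injective A := by
    intro x y hxy
    have : c * ‖x - y‖ ≤ ‖A (x - y)‖ := hlow _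
    rw [map_sub, hxy, sub_self, norm_zero] at this
    have : ‖x - y‖ ≤ 0 := by nlinarith [norm_nonneg (x - y)]
    have : x - y = 0 := norm_le_zero_iff.mp this
    exact sub_eq_zero.mp this
  have hsurj : Function.Surjective A :=
    (LinearMap.injective_iff_surjective (f := (A : E →ₗ[ℝ] E))).mp hinj
  -- image of unit ball contains ball of radius c
  have himg : Metric.ball (0 : E) c ⊆ A '' Metric.ball (0 : E) 1 := by
    intro y hy
    obtain ⟨x, rfl⟩ := hsurj y
    refine ⟨x, ?_, rfl⟩
    rw [Metric.mem_ball, dist_zero_right] at hy ⊢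
    have := hlow x
    by_contra hcon
    push_neg at hcon
    nlinarith
  have hmeas := MeasureTheory.measure_mono (μ := MeasureTheory.volume) himg
  rw [MeasureTheory.Measure.addHaar_image_continuousLinearMap,
    MeasureTheory.Measure.addHaar_ball _ _ hcpos.le] at hmeas
  have hfr : Module.finrank ℝ E = 3 := finrank_euclideanSpace_fin
  rw [hfr] at hmeas
  have hB0 : (0 : ENNReal) < MeasureTheory.volume (Metric.ball (0 : E) 1) :=
    Metric.measure_ball_pos _ _ one_pos
  have hBt : MeasureTheory.volume (Metric.ball (0 : E) 1) ≠ ⊤ :=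
    MeasureTheory.measure_ball_lt_top.ne
  have hle : ENNReal.ofReal (c ^ 3) ≤ ENNReal.ofReal |LinearMap.det (A : E →ₗ[ℝ] E)| :=
    (ENNReal.mul_le_mul_iff_left hB0.ne' hBt).mp hmeas
  have hle' : c ^ 3 ≤ |LinearMap.det (A : E →ₗ[ℝ] E)| := by
    have := (ENNReal.ofReal_le_ofReal_iff (abs_nonneg _)).mp hle
    exact this
  have hdet : A.det = LinearMap.det (A : E →ₗ[ℝ] E) := rfl
  rw [hdet]
  have hexp3 : Real.exp (κ * t) ^ 3 = Real.exp (3 * κ * t) := by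
    rw [← Real.exp_nat_mul]
    norm_num
    ring_nf
  have hc3 : c ^ 3 = (512 / 729) * Real.exp (3 * κ * t) := by
    rw [hc, he, mul_pow, hexp3]
    norm_num
  have hhalf : (1 / 2 : ℝ) * Real.exp (3 * κ * t) ≤ c ^ 3 := by
    rw [hc3]
    have : (0:ℝ) < Real.exp (3 * κ * t) := Real.exp_pos _
    nlinarith
  linarith
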